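/- Let b ≥ 2 and d ≥ 2 be integers and let T be the full ℤ^d-shift on an alphabet of b symbols. Then the dynamical Mertens sum M_T(N) = ∑_{τ closed orbit, |τ| ≤ N} b^{-|τ|} satisfies M_T(N) = ∑_{n=1}^{N} a_n(ℤ^d)/n + O(1), where a_n(ℤ^d) is the number of subgroups of ℤ^d of index n. -/

import Mathlib

/-- `a d n` is the number of subgroups of `ℤ^d` of index exactly `n`. -/
noncomputable def subgroupCount (d n : ℕ) : ℕ :=
  Nat.card {H : AddSubgroup (Fin d → ℤ) // H.index = n}

/-- The full `ℤ^d`-shift on `b` symbols: `(T_g x)_h = x_{g+h}`. -/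
def fullShift (d b : ℕ) (g : Fin d → ℤ) (x : (Fin d → ℤ) → Fin b) :
    (Fin d → ℤ) → Fin b :=
  fun h => x (g + h)

/-- A closed orbit of the full `ℤ^d`-shift is a finite orbit of the action. -/
def IsClosedOrbit (d b : ℕ) (τ : Set ((Fin d → ℤ) → Fin b)) : Prop :=
  (∃ x, τ = {y | ∃ g, y = fullShift d b g x}) ∧ τ.Finite

/-- The dynamical Mertens sum `M_T(N) = ∑_{|τ| ≤ N} b^{-|τ|}` over closed orbits `τ`. -/
noncomputable def mertensSum (d b N : ℕ) : ℝ :=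
  ∑ᶠ τ ∈ {τ : Set ((Fin d → ℤ) → Fin b) | IsClosedOrbit d b τ ∧ Nat.card τ ≤ N},
    ((b : ℝ))⁻¹ ^ (Nat.card τ)

namespace MertensAux


variable {d b : ℕ}

lemma shift_zero (x : (Fin d → ℤ) → Fin b) : fullShift d b 0 x = x :=
  funext fun h => by simp [fullShift]

lemma shift_add (g g' : Fin d → ℤ) (x : (Fin d → ℤ) → Fin b) :
    fullShift d b (g + g') x = fullShift d b g (fullShift d b g' x) :=
  funext fun h => by simp [fullShift, add_left_comm, add_comm, add_assoc]

/-- The stabilizer of a point under the full shift. -/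
def stab (x : (Fin d → ℤ) → Fin b) : AddSubgroup (Fin d → ℤ) where
  carrier := {g | fullShift d b g x = x}
  zero_mem' := shift_zero x
  add_mem' := by
    intro a c ha hc
    show fullShift d b (a + c) x = x
    rw [shift_add, hc, ha]
  neg_mem' := by
    intro a ha
    show fullShift d b (-a) x = x
    calc fullShift d b (-a) x = fullShift d b (-a) (fullShift d b a x) := by
          rw [show fullShift d b a x = x from ha]
      _ = fullShift d b (-a + a) x := (shift_add _ _ _).symm
      _ = x := by rw [neg_add_cancel]; exact shift_zero x

@[simp] lemma mem_stab {x : (Fin d → ℤ) → Fin b} {g : Fin d → ℤ} :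
    g ∈ stab x ↔ fullShift d b g x = x := Iff.rfl

lemma shift_eq_iff {x : (Fin d → ℤ) → Fin b} {g g' : Fin d → ℤ} :
    fullShift d b g x = fullShift d b g' x ↔ g - g' ∈ stab x := by
  constructor
  · intro h
    show fullShift d b (g - g') x = x
    calc fullShift d b (g - g') x = fullShift d b (-g' + g) x := by rw [neg_add_eq_sub]
      _ = fullShift d b (-g') (fullShift d b g x) := shift_add _ _ _
      _ = fullShift d b (-g') (fullShift d b g' x) := by rw [h]
      _ = fullShift d b (-g' + g') x := (shift_add _ _ _).symm
      _ = x := by rw [neg_add_cancel]; exact shift_zero x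
  · intro h
    calc fullShift d b g x = fullShift d b (g' + (g - g')) x := by
          rw [add_sub_cancel]
      _ = fullShift d b g' (fullShift d b (g - g') x) := shift_add _ _ _
      _ = fullShift d b g' x := by rw [show fullShift d b (g - g') x = x from h]

lemma stab_shift (g : Fin d → ℤ) (x : (Fin d → ℤ) → Fin b) :
    stab (fullShift d b g x) = stab x := by
  ext h
  simp only [mem_stab]
  rw [← shift_add, shift_eq_iff]
  simp

/-- The orbit of a point under the full shift. -/
def orbit (x : (Fin d → ℤ) → Fin b) : Set ((Fin d → ℤ) → Fin b) :=
  {y | ∃ g, y = fullShift d b g x}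

lemma mem_orbit_self (x : (Fin d → ℤ) → Fin b) : x ∈ orbit x :=
  ⟨0, (shift_zero x).symm⟩

lemma orbit_shift (g : Fin d → ℤ) (x : (Fin d → ℤ) → Fin b) :
    orbit (fullShift d b g x) = orbit x := by
  ext y
  constructor
  · rintro ⟨h, rfl⟩
    exact ⟨h + g, (shift_add _ _ _).symm ▸ rfl⟩
  · rintro ⟨h, rfl⟩
    refine ⟨h - g, ?_⟩
    rw [← shift_add, sub_add_cancel]

noncomputable def orbitEquiv (x : (Fin d → ℤ) → Fin b) :
    ((Fin d → ℤ) ⧸ stab x) ≃ orbit x := by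
  refine Equiv.ofBijective
    (fun q => Quotient.liftOn' q (fun g => (⟨fullShift d b g x, g, rfl⟩ : orbit x)) ?_) ⟨?_, ?_⟩
  · intro a c hac
    have : -a + c ∈ stab x := QuotientAddGroup.leftRel_apply.mp hac
    have hca : c - a ∈ stab x := by rwa [neg_add_eq_sub] at this
    exact Subtype.ext (shift_eq_iff.mpr (by simpa [neg_sub] using (stab x).neg_mem hca))
  · intro q q'
    induction q using Quotient.inductionOn'
    induction q' using Quotient.inductionOn'
    rename_i a c
    intro h
    have : fullShift d b a x = fullShift d b c x := congrArg Subtype.val h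
    have hm : a - c ∈ stab x := shift_eq_iff.mp this
    apply Quotient.sound'
    rw [QuotientAddGroup.leftRel_apply, neg_add_eq_sub]
    simpa [neg_sub] using (stab x).neg_mem hm
  · rintro ⟨y, g, rfl⟩
    exact ⟨QuotientAddGroup.mk g, rfl⟩

lemma card_orbit (x : (Fin d → ℤ) → Fin b) :
    Nat.card (orbit x) = (stab x).index :=
  (Nat.card_congr (orbitEquiv x)).symm

lemma orbit_finite_iff (x : (Fin d → ℤ) → Fin b) :
    (orbit x).Finite ↔ (stab x).index ≠ 0 := by
  rw [← Set.finite_coe_iff, ← (orbitEquiv x).finite_iff]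
  rw [Ne, AddSubgroup.index_eq_zero_iff_infinite, not_infinite_iff_finite]


open Function

/-- Points fixed by every element of `L`. -/
def fixSet (L : AddSubgroup (Fin d → ℤ)) (b : ℕ) : Set ((Fin d → ℤ) → Fin b) :=
  {x | ∀ g ∈ L, fullShift d b g x = x}

lemma mem_fixSet_iff {L : AddSubgroup (Fin d → ℤ)} {x : (Fin d → ℤ) → Fin b} :
    x ∈ fixSet L b ↔ L ≤ stab x := Iff.rfl

lemma self_mem_fixSet (x : (Fin d → ℤ) → Fin b) : x ∈ fixSet (stab x) b :=
  fun _ hg => hg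

noncomputable def fixEquiv (L : AddSubgroup (Fin d → ℤ)) (b : ℕ) :
    fixSet L b ≃ (((Fin d → ℤ) ⧸ L) → Fin b) where
  toFun := fun x q => Quotient.liftOn' q x.1 (by
    rintro g g' hgg'
    have h : -g + g' ∈ L := QuotientAddGroup.leftRel_apply.mp hgg'
    have h2 : g' - g ∈ L := by rwa [neg_add_eq_sub] at h
    have := congrFun (x.2 (g' - g) h2) g
    simp only [fullShift, sub_add_cancel] at this
    exact this.symm)
  invFun := fun y => ⟨fun g => y (QuotientAddGroup.mk g), by
    intro g hg
    funext h
    show y (QuotientAddGroup.mk (g + h)) = y (QuotientAddGroup.mk h)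
    congr 1
    apply Quotient.sound'
    rw [QuotientAddGroup.leftRel_apply]
    have : -(g + h) + h = -g := by abel
    rw [this]
    exact L.neg_mem hg⟩
  left_inv := fun x => Subtype.ext rfl
  right_inv := fun y => by
    funext q
    induction q using Quotient.inductionOn'
    rfl

lemma card_fixSet {L : AddSubgroup (Fin d → ℤ)} (hL : L.index ≠ 0) :
    Nat.card (fixSet L b) = b ^ L.index := by
  haveI : Finite ((Fin d → ℤ) ⧸ L) :=
    not_infinite_iff_finite.mp (by rwa [← AddSubgroup.index_eq_zero_iff_infinite])
  rw [Nat.card_congr (fixEquiv L b), Nat.card_fun, Nat.card_eq_fintype_card,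
    Fintype.card_fin]
  rfl

lemma fixSet_finite {L : AddSubgroup (Fin d → ℤ)} (hL : L.index ≠ 0) :
    (fixSet L b).Finite := by
  haveI : Finite ((Fin d → ℤ) ⧸ L) :=
    not_infinite_iff_finite.mp (by rwa [← AddSubgroup.index_eq_zero_iff_infinite])
  rw [← Set.finite_coe_iff]
  exact Finite.of_equiv _ (fixEquiv L b).symm

/-- Every subgroup of `ℤ^d` is generated by `d` elements. -/
lemma exists_gen {d : ℕ} (M : AddSubgroup (Fin d → ℤ)) :
    ∃ f : Fin d → (Fin d → ℤ), AddSubgroup.closure (Set.range f) = M := by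
  set N : Submodule ℤ (Fin d → ℤ) := AddSubgroup.toIntSubmodule M with hN
  obtain ⟨n, bas⟩ := Submodule.basisOfPid (Pi.basisFun ℤ (Fin d)) N
  have hrank : n = Module.finrank ℤ N := by
    rw [Module.finrank_eq_card_basis bas, Fintype.card_fin]
  have hn : n ≤ d := by
    rw [hrank]
    calc Module.finrank ℤ N ≤ Module.finrank ℤ (Fin d → ℤ) := Submodule.finrank_le N
      _ = d := by simp [Module.finrank_pi]
  set v : Fin n → (Fin d → ℤ) := fun i => (bas i : Fin d → ℤ) with hv
  have hspan : Submodule.span ℤ (Set.range v) = N := by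
    have h1 : Submodule.span ℤ (Set.range bas) = ⊤ := bas.span_eq
    have h2 := congrArg (Submodule.map N.subtype) h1
    rw [Submodule.map_span, Submodule.map_subtype_top, ← Set.range_comp] at h2
    exact h2
  refine ⟨fun i => if h : (i : ℕ) < n then v ⟨i, h⟩ else 0, ?_⟩
  apply le_antisymm
  · rw [AddSubgroup.closure_le]
    rintro _ ⟨i, rfl⟩
    by_cases h : (i : ℕ) < n
    · simp only [h, dif_pos]
      have : v ⟨i, h⟩ ∈ N := (bas ⟨i, h⟩).2
      exact this
    · simp only [h, dif_neg, not_false_iff]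
      exact M.zero_mem
  · intro x hx
    have hxN : x ∈ Submodule.span ℤ (Set.range v) := by rw [hspan]; exact hx
    have : Submodule.span ℤ (Set.range v) ≤
        Submodule.span ℤ (Set.range (fun i : Fin d => if h : (i : ℕ) < n then v ⟨i, h⟩ else 0)) := by
      apply Submodule.span_mono
      rintro _ ⟨j, rfl⟩
      refine ⟨⟨(j : ℕ), lt_of_lt_of_le j.2 hn⟩, ?_⟩
      simp only [j.2, dif_pos]
    have hx2 := this hxN
    rw [← Submodule.span_int_eq_addSubgroupClosure]
    exact hx2

/-- The number of subgroups of a finite quotient of `ℤ^d` is at most `(card Q)^d`. -/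
lemma card_addSubgroup_le {d : ℕ} {Q : Type*} [AddCommGroup Q] [Finite Q]
    (π : (Fin d → ℤ) →+ Q) (hπ : Surjective π) :
    Nat.card (AddSubgroup Q) ≤ Nat.card Q ^ d := by
  have key : ∀ H : AddSubgroup Q, ∃ f : Fin d → Q, AddSubgroup.closure (Set.range f) = H := by
    intro H
    obtain ⟨f, hf⟩ := exists_gen (H.comap π)
    refine ⟨π ∘ f, ?_⟩
    rw [Set.range_comp, ← AddMonoidHom.map_closure, hf,
      AddSubgroup.map_comap_eq_self_of_surjective hπ]
  choose F hF using key
  have hinj : Function.Injective F := fun H H' h => by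
    rw [← hF H, ← hF H', h]
  calc Nat.card (AddSubgroup Q) ≤ Nat.card (Fin d → Q) := Nat.card_le_card_of_injective F hinj
    _ = Nat.card Q ^ d := by rw [Nat.card_fun]; simp

/-- The subgroup `n·ℤ^d`. -/
def nLatt (d n : ℕ) : AddSubgroup (Fin d → ℤ) :=
  AddMonoidHom.range (AddMonoidHom.mk' (fun g : Fin d → ℤ => (n : ℤ) • g)
    (fun a c => smul_add _ a c))

/-- The canonical surjection `ℤ^d → (ZMod n)^d`. -/
def modHom (d n : ℕ) : (Fin d → ℤ) →+ (Fin d → ZMod n) :=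
  AddMonoidHom.mk' (fun g i => ((g i : ℤ) : ZMod n)) (by
    intro a c
    funext i
    simp)

lemma modHom_surjective (d n : ℕ) : Surjective (modHom d n) := by
  intro y
  have : ∀ i, ∃ z : ℤ, (z : ZMod n) = y i := fun i => ZMod.intCast_surjective (y i)
  choose g hg using this
  exact ⟨g, funext hg⟩

lemma ker_modHom (d n : ℕ) : (modHom d n).ker = nLatt d n := by
  ext g
  simp only [AddMonoidHom.mem_ker, modHom, AddMonoidHom.mk'_apply]
  constructor
  · intro h
    have hdvd : ∀ i, (n : ℤ) ∣ g i := by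
      intro i
      rw [← ZMod.intCast_zmod_eq_zero_iff_dvd]
      exact congrFun h i
    choose c hc using hdvd
    exact ⟨c, funext fun i => by simp [hc i, mul_comm]⟩
  · rintro ⟨c, rfl⟩
    funext i
    show (((n : ℤ) • c) i : ZMod n) = 0
    simp [Pi.smul_apply]

lemma index_nLatt (d n : ℕ) : (nLatt d n).index = n ^ d := by
  rw [AddSubgroup.index, ← ker_modHom d n,
    Nat.card_congr (QuotientAddGroup.quotientKerEquivOfSurjective _ (modHom_surjective d n)).toEquiv,
    Nat.card_fun]
  simp [Nat.card_zmod]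

lemma nLatt_le {d n : ℕ} {H : AddSubgroup (Fin d → ℤ)} (hH : H.index = n) :
    nLatt d n ≤ H := by
  rintro _ ⟨g, rfl⟩
  show (n : ℤ) • g ∈ H
  have h1 : ((n : ℤ) • g : Fin d → ℤ) = n • g := by simp
  rw [h1, ← QuotientAddGroup.eq_zero_iff, QuotientAddGroup.mk_nsmul]
  have hc : Nat.card ((Fin d → ℤ) ⧸ H) = n := hH
  rw [← hc]
  exact card_nsmul_eq_zero'

/-- Subgroups all containing a given finite-index subgroup `L`: counting and finiteness. -/
lemma card_le_of_le {d : ℕ} (L : AddSubgroup (Fin d → ℤ)) (hL : L.index ≠ 0)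
    (S : Set (AddSubgroup (Fin d → ℤ))) (hS : ∀ H ∈ S, L ≤ H) :
    Nat.card S ≤ L.index ^ d ∧ S.Finite := by
  haveI : Finite ((Fin d → ℤ) ⧸ L) :=
    not_infinite_iff_finite.mp (by rwa [← AddSubgroup.index_eq_zero_iff_infinite])
  set π := QuotientAddGroup.mk' L
  have hπ : Surjective π := QuotientAddGroup.mk'_surjective L
  haveI : Finite (AddSubgroup ((Fin d → ℤ) ⧸ L)) :=
    Finite.of_injective _ (SetLike.coe_injective (A := AddSubgroup ((Fin d → ℤ) ⧸ L)))
  have hinj : Injective (fun H : S => AddSubgroup.map π (H : AddSubgroup (Fin d → ℤ))) := by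
    rintro ⟨H1, h1⟩ ⟨H2, h2⟩ he
    simp only at he
    have e1 : (H1.map π).comap π = H1 := by
      rw [AddSubgroup.comap_map_eq, QuotientAddGroup.ker_mk', sup_eq_left.mpr (hS _ h1)]
    have e2 : (H2.map π).comap π = H2 := by
      rw [AddSubgroup.comap_map_eq, QuotientAddGroup.ker_mk', sup_eq_left.mpr (hS _ h2)]
    apply Subtype.ext
    show H1 = H2
    rw [← e1, ← e2, he]
  haveI hfin : Finite S := Finite.of_injective _ hinj
  refine ⟨?_, Set.finite_coe_iff.mp hfin⟩
  calc Nat.card S ≤ Nat.card (AddSubgroup ((Fin d → ℤ) ⧸ L)) :=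
        Nat.card_le_card_of_injective _ hinj
    _ ≤ Nat.card ((Fin d → ℤ) ⧸ L) ^ d := card_addSubgroup_le π hπ
    _ = L.index ^ d := rfl

lemma indexSet_finite (d n : ℕ) (hn : n ≠ 0) :
    {H : AddSubgroup (Fin d → ℤ) | H.index = n}.Finite := by
  have h0 : (nLatt d n).index ≠ 0 := by
    rw [index_nLatt]; exact pow_ne_zero _ hn
  exact (card_le_of_le (nLatt d n) h0 _ (fun H hH => nLatt_le hH)).2

lemma subgroupCount_le (d n : ℕ) (hn : n ≠ 0) : subgroupCount d n ≤ n ^ (d * d) := by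
  have h0 : (nLatt d n).index ≠ 0 := by
    rw [index_nLatt]; exact pow_ne_zero _ hn
  have := (card_le_of_le (nLatt d n) h0 {H | H.index = n} (fun H hH => nLatt_le hH)).1
  rw [index_nLatt] at this
  calc subgroupCount d n = Nat.card {H : AddSubgroup (Fin d → ℤ) | H.index = n} :=
        Nat.card_congr (Equiv.subtypeEquivRight fun _ => Iff.rfl)
    _ ≤ (n ^ d) ^ d := this
    _ = n ^ (d * d) := by rw [← pow_mul]

lemma lattSet_finite (d N : ℕ) :
    {L : AddSubgroup (Fin d → ℤ) | L.index ∈ Finset.Icc 1 N}.Finite := by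
  have : {L : AddSubgroup (Fin d → ℤ) | L.index ∈ Finset.Icc 1 N} ⊆
      ⋃ n ∈ Finset.Icc 1 N, {H : AddSubgroup (Fin d → ℤ) | H.index = n} := by
    intro L hL
    exact Set.mem_biUnion hL rfl
  exact Set.Finite.subset (Set.Finite.biUnion (Finset.Icc 1 N).finite_toSet
    (fun n hn => indexSet_finite d n (by simp at hn; omega))) this

lemma one_le_sqrt_b {b : ℕ} (hb : 2 ≤ b) : (1:ℝ) < Real.sqrt b := by
  rw [show (1:ℝ) = Real.sqrt 1 from (Real.sqrt_one).symm]
  exact Real.sqrt_lt_sqrt (by norm_num) (by exact_mod_cast hb.trans_lt' one_lt_two)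

lemma pow_le_sqrt_pow {b m n : ℕ} (hb : 2 ≤ b) (hdvd : m ∣ n) (hmn : m ≠ n) (hn : n ≠ 0) :
    ((b : ℝ)) ^ m ≤ Real.sqrt b ^ n := by
  obtain ⟨k, hk⟩ := hdvd
  have hk2 : 2 ≤ k := by
    rcases Nat.lt_or_ge k 2 with h | h
    · interval_cases k <;> omega
    · exact h
  have h2m : 2 * m ≤ n := by
    subst hk
    calc 2 * m = m * 2 := by ring
      _ ≤ m * k := Nat.mul_le_mul_left m hk2
  have hs1 : (1:ℝ) ≤ Real.sqrt b := (one_le_sqrt_b hb).le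
  calc ((b:ℝ))^m = (Real.sqrt b ^ 2)^m := by rw [Real.sq_sqrt (by positivity)]
    _ = Real.sqrt b ^ (2*m) := by rw [← pow_mul]
    _ ≤ Real.sqrt b ^ n := pow_le_pow_right₀ hs1 h2m

lemma bad_card_bound {d b : ℕ} (hb : 2 ≤ b) (L : AddSubgroup (Fin d → ℤ)) (hn0 : L.index ≠ 0) :
    ((Nat.card (fixSet L b) : ℝ)) - ({x : (Fin d → ℤ) → Fin b | stab x = L}.ncard : ℝ) ≤
      (L.index : ℝ) ^ d * Real.sqrt b ^ L.index ∧
    {x : (Fin d → ℤ) → Fin b | stab x = L}.ncard ≤ Nat.card (fixSet L b) := by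
  classical
  set n := L.index with hn
  have hfixfin := fixSet_finite (b := b) hn0
  set fixF := hfixfin.toFinset with hfixF
  set SLF := fixF.filter (fun x => stab x = L) with hSLF
  set BadF := fixF.filter (fun x => ¬ stab x = L) with hBadF
  have hsplit : SLF.card + BadF.card = fixF.card :=
    Finset.card_filter_add_card_filter_not _
  have hcardfix : Nat.card (fixSet L b) = fixF.card := by
    rw [Nat.card_coe_set_eq, Set.ncard_eq_toFinset_card _ hfixfin]
  have hSL : {x : (Fin d → ℤ) → Fin b | stab x = L} = ↑SLF := by
    ext x
    simp only [Set.mem_setOf_eq, hSLF, Finset.coe_filter, hfixF, Set.Finite.mem_toFinset]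
    exact ⟨fun h => ⟨fun g hg => mem_stab.mp (h.symm ▸ hg), h⟩, fun h => h.2⟩
  have hncard : {x : (Fin d → ℤ) → Fin b | stab x = L}.ncard = SLF.card := by
    rw [hSL, Set.ncard_coe_finset]
  constructor
  swap
  · rw [hncard, hcardfix]; omega
  rw [hncard, hcardfix]
  have hLHS : (fixF.card : ℝ) - SLF.card = BadF.card := by
    have := hsplit
    push_cast [← this]
    ring
  rw [hLHS]
  -- now bound BadF.card
  have hsup := card_le_of_le L hn0 {H | L < H ∧ H.index ≠ 0} (fun H hH => le_of_lt hH.1)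
  set supF := hsup.2.toFinset with hsupF
  set F : AddSubgroup (Fin d → ℤ) → Finset ((Fin d → ℤ) → Fin b) :=
    fun H => if h : H.index = 0 then ∅ else (fixSet_finite h).toFinset with hF
  have hsubset : BadF ⊆ supF.biUnion F := by
    intro x hx
    rw [hBadF, Finset.mem_filter] at hx
    have hxfix : x ∈ fixSet L b := (Set.Finite.mem_toFinset _).mp hx.1
    have hlt : L < stab x := lt_of_le_of_ne (mem_fixSet_iff.mp hxfix) (Ne.symm hx.2)
    have hdvd : (stab x).index ∣ L.index := AddSubgroup.index_dvd_of_le hlt.le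
    have hne : (stab x).index ≠ 0 :=
      (Nat.pos_of_dvd_of_pos hdvd (Nat.pos_of_ne_zero hn0)).ne'
    refine Finset.mem_biUnion.mpr ⟨stab x, ?_, ?_⟩
    · rw [hsupF, Set.Finite.mem_toFinset]; exact ⟨hlt, hne⟩
    · rw [hF]; simp only [dif_neg hne]; rw [Set.Finite.mem_toFinset]
      exact self_mem_fixSet x
  have hcard1 : BadF.card ≤ ∑ H ∈ supF, (F H).card :=
    le_trans (Finset.card_le_card hsubset) (Finset.card_biUnion_le)
  have hFb : ∀ H ∈ supF, ((F H).card : ℝ) ≤ Real.sqrt b ^ n := by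
    intro H hH
    rw [hsupF, Set.Finite.mem_toFinset] at hH
    obtain ⟨hlt, hm0⟩ := hH
    have hFH : F H = (fixSet_finite hm0).toFinset := by rw [hF]; simp only [dif_neg hm0]
    have hcards : (F H).card = b ^ H.index := by
      rw [hFH, ← Set.ncard_eq_toFinset_card _ (fixSet_finite hm0),
        ← Nat.card_coe_set_eq, card_fixSet hm0]
    rw [hcards]
    have hdvd : H.index ∣ n := AddSubgroup.index_dvd_of_le hlt.le
    have hneq : H.index ≠ n := by
      intro he
      have hrel := AddSubgroup.relIndex_mul_index hlt.le
      rw [he] at hrel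
      have h1 : L.relIndex H = 1 :=
        Nat.eq_of_mul_eq_mul_right (Nat.pos_of_ne_zero hn0) (by rw [hrel, one_mul])
      have hle : H ≤ L := AddSubgroup.relIndex_eq_one.mp h1
      exact hlt.ne (le_antisymm hlt.le hle)
    push_cast
    exact pow_le_sqrt_pow hb hdvd hneq hn0
  have hsupcard : (supF.card : ℝ) ≤ (n:ℝ)^d := by
    have he : supF.card = Nat.card {H : AddSubgroup (Fin d → ℤ) | L < H ∧ H.index ≠ 0} := by
      rw [Nat.card_coe_set_eq, Set.ncard_eq_toFinset_card _ hsup.2]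
    rw [he]
    exact_mod_cast hsup.1
  calc (BadF.card : ℝ) ≤ ∑ H ∈ supF, ((F H).card : ℝ) := by exact_mod_cast hcard1
    _ ≤ ∑ H ∈ supF, Real.sqrt b ^ n := Finset.sum_le_sum hFb
    _ = supF.card * Real.sqrt b ^ n := by rw [Finset.sum_const, nsmul_eq_mul]
    _ ≤ (n:ℝ)^d * Real.sqrt b ^ n :=
      mul_le_mul_of_nonneg_right hsupcard (by positivity)

lemma mertensSum_eq_sum_points (d b N : ℕ)
    (hfin : {x : (Fin d → ℤ) → Fin b | (stab x).index ∈ Finset.Icc 1 N}.Finite) :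
    mertensSum d b N =
      ∑ x ∈ hfin.toFinset, ((b:ℝ))⁻¹ ^ (stab x).index / ((stab x).index : ℝ) := by
  classical
  have hOset : {τ : Set ((Fin d → ℤ) → Fin b) | IsClosedOrbit d b τ ∧ Nat.card τ ≤ N} =
      orbit '' {x | (stab x).index ∈ Finset.Icc 1 N} := by
    ext τ
    constructor
    · rintro ⟨⟨⟨x, rfl⟩, hfin'⟩, hcard⟩
      refine ⟨x, ?_, rfl⟩
      have hf2 : (orbit x).Finite := hfin'
      have hne := (orbit_finite_iff x).mp hf2
      have hc : Nat.card (orbit x) ≤ N := hcard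
      simp only [Set.mem_setOf_eq, Finset.mem_Icc]
      refine ⟨Nat.one_le_iff_ne_zero.mpr hne, ?_⟩
      rw [← card_orbit x]
      exact hc
    · rintro ⟨x, hx, rfl⟩
      simp only [Set.mem_setOf_eq, Finset.mem_Icc] at hx
      have hne : (stab x).index ≠ 0 := by omega
      refine ⟨⟨⟨x, rfl⟩, (orbit_finite_iff x).mpr hne⟩, ?_⟩
      show Nat.card (orbit x) ≤ N
      rw [card_orbit x]
      omega
  have himfin : (orbit '' {x : (Fin d → ℤ) → Fin b |
      (stab x).index ∈ Finset.Icc 1 N}).Finite := hfin.image _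
  rw [mertensSum, hOset, finsum_mem_eq_finite_toFinset_sum _ himfin]
  have himg : himfin.toFinset = hfin.toFinset.image orbit := by
    ext τ
    simp [Set.Finite.mem_toFinset]
  rw [himg]
  refine Finset.sum_image'
    (fun x => ((b:ℝ))⁻¹ ^ (stab x).index / ((stab x).index : ℝ)) ?_
  intro x hx
  rw [Set.Finite.mem_toFinset] at hx
  simp only [Set.mem_setOf_eq, Finset.mem_Icc] at hx
  have hne : (stab x).index ≠ 0 := by omega
  have hOxfin : (orbit x).Finite := (orbit_finite_iff x).mpr hne
  have hfilter : hfin.toFinset.filter (fun x' => orbit x' = orbit x) = hOxfin.toFinset := by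
    ext x'
    simp only [Finset.mem_filter, Set.Finite.mem_toFinset, Set.mem_setOf_eq]
    constructor
    · rintro ⟨_, horb⟩
      rw [← horb]
      exact mem_orbit_self x'
    · rintro ⟨g, rfl⟩
      refine ⟨?_, orbit_shift g x⟩
      rw [stab_shift]
      simp only [Finset.mem_Icc]
      omega
  rw [hfilter]
  have hconst : ∀ x' ∈ hOxfin.toFinset,
      ((b:ℝ))⁻¹ ^ (stab x').index / ((stab x').index : ℝ) =
      ((b:ℝ))⁻¹ ^ (stab x).index / ((stab x).index : ℝ) := by
    intro x' hx'
    rw [Set.Finite.mem_toFinset] at hx'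
    obtain ⟨g, rfl⟩ := hx'
    rw [stab_shift]
  rw [Finset.sum_congr rfl hconst, Finset.sum_const, nsmul_eq_mul]
  have hcardF : hOxfin.toFinset.card = (stab x).index := by
    rw [← Set.ncard_eq_toFinset_card _ hOxfin, ← Nat.card_coe_set_eq, card_orbit]
  rw [hcardF]
  have hcast : ((stab x).index : ℝ) ≠ 0 := Nat.cast_ne_zero.mpr hne
  rw [show ((b:ℝ))⁻¹ ^ Nat.card (orbit x) = ((b:ℝ))⁻¹ ^ (stab x).index by rw [card_orbit]]
  field_simp

lemma PN_finite (d b N : ℕ) :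
    {x : (Fin d → ℤ) → Fin b | (stab x).index ∈ Finset.Icc 1 N}.Finite := by
  have h : ∀ L ∈ {L : AddSubgroup (Fin d → ℤ) | L.index ∈ Finset.Icc 1 N},
      (fixSet L b).Finite := by
    intro L hL
    apply fixSet_finite
    simp only [Set.mem_setOf_eq, Finset.mem_Icc] at hL
    omega
  refine Set.Finite.subset (Set.Finite.biUnion (lattSet_finite d N) h) ?_
  intro x hx
  exact Set.mem_biUnion hx (self_mem_fixSet x)

end MertensAux

open MertensAux

theorem mertens_asymptotic (b d : ℕ) (hb : 2 ≤ b) (hd : 2 ≤ d) :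
    ∃ C : ℝ, ∀ N : ℕ, 1 ≤ N →
      |mertensSum d b N - ∑ n ∈ Finset.Icc 1 N, (subgroupCount d n : ℝ) / n| ≤ C := by
  classical
  have hb0 : (0:ℝ) < b := by
    have : 0 < b := by omega
    exact_mod_cast this
  have hsq1 : (1:ℝ) < Real.sqrt b := one_le_sqrt_b hb
  set r : ℝ := (Real.sqrt b)⁻¹ with hrdef
  have hr0 : 0 ≤ r := by positivity
  have hr1 : r < 1 := inv_lt_one_of_one_lt₀ hsq1
  have hsumm : Summable (fun n : ℕ => (n:ℝ) ^ (d*d+d) * r ^ n) :=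
    summable_pow_mul_geometric_of_norm_lt_one _ (by rwa [Real.norm_eq_abs, abs_of_nonneg hr0])
  refine ⟨∑' n : ℕ, (n:ℝ) ^ (d*d+d) * r ^ n, fun N hN => ?_⟩
  have hlatt := lattSet_finite d N
  have hPNfin := PN_finite d b N
  set PN := hPNfin.toFinset with hPN
  set latt := hlatt.toFinset with hlattdef
  have hmaps : ∀ x ∈ PN, stab x ∈ latt := by
    intro x hx
    rw [hlattdef, Set.Finite.mem_toFinset]
    rw [hPN, Set.Finite.mem_toFinset] at hx
    exact hx
  have hmaps2 : ∀ L ∈ latt, L.index ∈ Finset.Icc 1 N := by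
    intro L hL
    rw [hlattdef, Set.Finite.mem_toFinset] at hL
    exact hL
  have hfilterSL : ∀ L ∈ latt, (↑(PN.filter (fun x => stab x = L)) : Set _) =
      {x : (Fin d → ℤ) → Fin b | stab x = L} := by
    intro L hL
    have hL' := hmaps2 L hL
    ext x
    simp only [Finset.coe_filter, Set.mem_setOf_eq, hPN, Set.Finite.mem_toFinset]
    exact ⟨fun h => h.2, fun h => ⟨by rw [h]; exact hL', h⟩⟩
  have hM : mertensSum d b N = ∑ L ∈ latt, ((PN.filter (fun x => stab x = L)).card : ℝ) *
      (((b:ℝ))⁻¹ ^ L.index / (L.index : ℝ)) := by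
    rw [mertensSum_eq_sum_points d b N hPNfin]
    rw [← Finset.sum_fiberwise_of_maps_to hmaps
      (fun x => ((b:ℝ))⁻¹ ^ (stab x).index / ((stab x).index : ℝ))]
    refine Finset.sum_congr rfl (fun L hL => ?_)
    have hc : ∀ x ∈ PN.filter (fun x => stab x = L),
        ((b:ℝ))⁻¹ ^ (stab x).index / ((stab x).index : ℝ) =
        ((b:ℝ))⁻¹ ^ L.index / (L.index : ℝ) := by
      intro x hx
      rw [(Finset.mem_filter.mp hx).2]
    rw [Finset.sum_congr rfl hc, Finset.sum_const, nsmul_eq_mul]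
  have hcount : ∀ n ∈ Finset.Icc 1 N,
      (latt.filter (fun L => L.index = n)).card = subgroupCount d n := by
    intro n hn
    rcases Finset.mem_Icc.mp hn with ⟨h1, h2⟩
    have hn0 : n ≠ 0 := by omega
    have hset : latt.filter (fun L => L.index = n) = (indexSet_finite d n hn0).toFinset := by
      ext L
      simp only [Finset.mem_filter, hlattdef, Set.Finite.mem_toFinset, Set.mem_setOf_eq]
      constructor
      · exact fun h => h.2
      · intro h
        exact ⟨by rw [h]; exact Finset.mem_Icc.mpr ⟨h1, h2⟩, h⟩
    rw [hset, ← Set.ncard_eq_toFinset_card _ (indexSet_finite d n hn0),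
      ← Nat.card_coe_set_eq]
    exact (Nat.card_congr (Equiv.subtypeEquivRight fun _ => Iff.rfl)).symm
  have hA : ∑ n ∈ Finset.Icc 1 N, (subgroupCount d n : ℝ) / n =
      ∑ L ∈ latt, 1 / (L.index : ℝ) := by
    rw [← Finset.sum_fiberwise_of_maps_to hmaps2 (fun L => 1 / (L.index : ℝ))]
    refine Finset.sum_congr rfl (fun n hn => ?_)
    have h1 : ∀ L ∈ latt.filter (fun L => L.index = n),
        1 / (L.index : ℝ) = 1 / (n : ℝ) := by
      intro L hL
      rw [(Finset.mem_filter.mp hL).2]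
    rw [Finset.sum_congr rfl h1, Finset.sum_const, nsmul_eq_mul, hcount n hn, mul_one_div]
  have hE : ∀ L ∈ latt, (1:ℝ) / (L.index : ℝ) =
      (Nat.card (fixSet L b) : ℝ) * (((b:ℝ))⁻¹ ^ L.index / (L.index : ℝ)) := by
    intro L hL
    have hn0 : L.index ≠ 0 := by
      rcases Finset.mem_Icc.mp (hmaps2 L hL) with ⟨h1, _⟩
      omega
    rw [card_fixSet hn0]
    push_cast
    rw [← mul_div_assoc, ← mul_pow, mul_inv_cancel₀ (ne_of_gt hb0), one_pow]
  have hdiff : ∑ n ∈ Finset.Icc 1 N, (subgroupCount d n : ℝ) / n - mertensSum d b N =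
      ∑ L ∈ latt, ((Nat.card (fixSet L b) : ℝ) -
        ((PN.filter (fun x => stab x = L)).card : ℝ)) *
        (((b:ℝ))⁻¹ ^ L.index / (L.index : ℝ)) := by
    rw [hM, hA, Finset.sum_congr rfl hE, ← Finset.sum_sub_distrib]
    exact Finset.sum_congr rfl (fun L hL => by ring)
  have hterm : ∀ L ∈ latt,
      0 ≤ ((Nat.card (fixSet L b) : ℝ) -
          ((PN.filter (fun x => stab x = L)).card : ℝ)) *
          (((b:ℝ))⁻¹ ^ L.index / (L.index : ℝ)) ∧
      ((Nat.card (fixSet L b) : ℝ) -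
          ((PN.filter (fun x => stab x = L)).card : ℝ)) *
          (((b:ℝ))⁻¹ ^ L.index / (L.index : ℝ)) ≤ (L.index : ℝ)^d * r^(L.index) := by
    intro L hL
    rcases Finset.mem_Icc.mp (hmaps2 L hL) with ⟨h1, h2⟩
    have hn0 : L.index ≠ 0 := by omega
    have hcard_eq : (PN.filter (fun x => stab x = L)).card =
        {x : (Fin d → ℤ) → Fin b | stab x = L}.ncard := by
      rw [← hfilterSL L hL, Set.ncard_coe_finset]
    obtain ⟨hbound, hle⟩ := bad_card_bound hb L hn0
    have htpos : 0 ≤ ((b:ℝ))⁻¹ ^ L.index / (L.index : ℝ) := by positivity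
    have hsne : Real.sqrt b ≠ 0 := by positivity
    have hmul : Real.sqrt b ^ L.index * ((b:ℝ))⁻¹ ^ L.index = r ^ L.index := by
      rw [← mul_pow]
      congr 1
      rw [hrdef, show ((b:ℝ))⁻¹ = (Real.sqrt b)⁻¹ * (Real.sqrt b)⁻¹ by
        rw [← mul_inv, Real.mul_self_sqrt hb0.le], ← mul_assoc, mul_inv_cancel₀ hsne, one_mul]
    constructor
    · apply mul_nonneg _ htpos
      rw [hcard_eq]
      exact sub_nonneg.mpr (Nat.cast_le.mpr hle)
    · calc ((Nat.card (fixSet L b) : ℝ) -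
            ((PN.filter (fun x => stab x = L)).card : ℝ)) *
            (((b:ℝ))⁻¹ ^ L.index / (L.index : ℝ))
          ≤ ((L.index : ℝ)^d * Real.sqrt b ^ L.index) *
            (((b:ℝ))⁻¹ ^ L.index / (L.index : ℝ)) := by
            apply mul_le_mul_of_nonneg_right _ htpos
            rw [hcard_eq]
            exact hbound
        _ = (L.index : ℝ)^d * r^(L.index) / (L.index : ℝ) := by
            rw [show ((L.index : ℝ)^d * Real.sqrt b ^ L.index) *
              (((b:ℝ))⁻¹ ^ L.index / (L.index : ℝ)) =
              (L.index : ℝ)^d * (Real.sqrt b ^ L.index * ((b:ℝ))⁻¹ ^ L.index) / (L.index : ℝ)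
              from by ring, hmul]
        _ ≤ (L.index : ℝ)^d * r^(L.index) := by
            apply div_le_self (by positivity) (by exact_mod_cast h1)
  have hsum_bound : ∑ L ∈ latt, (L.index : ℝ)^d * r^(L.index) ≤
      ∑' n : ℕ, (n:ℝ) ^ (d*d+d) * r ^ n := by
    have h1 : ∑ L ∈ latt, (L.index : ℝ)^d * r^(L.index) =
        ∑ n ∈ Finset.Icc 1 N, (subgroupCount d n : ℝ) * ((n:ℝ)^d * r^n) := by
      rw [← Finset.sum_fiberwise_of_maps_to hmaps2 (fun L => (L.index : ℝ)^d * r^(L.index))]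
      refine Finset.sum_congr rfl (fun n hn => ?_)
      have h2 : ∀ L ∈ latt.filter (fun L => L.index = n),
          (L.index : ℝ)^d * r^(L.index) = (n:ℝ)^d * r^n := by
        intro L hL
        rw [(Finset.mem_filter.mp hL).2]
      rw [Finset.sum_congr rfl h2, Finset.sum_const, nsmul_eq_mul, hcount n hn]
    rw [h1]
    have h3 : ∀ n ∈ Finset.Icc 1 N,
        (subgroupCount d n : ℝ) * ((n:ℝ)^d * r^n) ≤ (n:ℝ)^(d*d+d) * r^n := by
      intro n hn
      rcases Finset.mem_Icc.mp hn with ⟨h1', h2'⟩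
      have hsc := subgroupCount_le d n (by omega)
      calc (subgroupCount d n : ℝ) * ((n:ℝ)^d * r^n)
          ≤ ((n:ℝ)^(d*d)) * ((n:ℝ)^d * r^n) := by
            apply mul_le_mul_of_nonneg_right _ (by positivity)
            exact_mod_cast hsc
        _ = (n:ℝ)^(d*d+d) * r^n := by rw [pow_add]; ring
    exact le_trans (Finset.sum_le_sum h3)
      (Summable.sum_le_tsum _ (fun i _ => by positivity) hsumm)
  have hApos : 0 ≤ ∑ n ∈ Finset.Icc 1 N, (subgroupCount d n : ℝ) / n - mertensSum d b N := by
    rw [hdiff]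
    exact Finset.sum_nonneg (fun L hL => (hterm L hL).1)
  rw [abs_sub_comm, abs_of_nonneg hApos, hdiff]
  exact le_trans (Finset.sum_le_sum (fun L hL => (hterm L hL).2)) hsum_bound
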